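/- arXiv:2309.07965 — 8 statements merged into one kernel-verified Lean document; each statement's English description precedes it below -/
import Mathlib

section
/- The relative Lipschitz saturation A*_{B,R} is an R-subalgebra of B containing g(A). -/
open TensorProduct

/-- Integral closure of an ideal: `x` satisfies an equation of integral dependence over `I`. -/
def Ideal.intClosure {S : Type*} [CommRing S] (I : Ideal S) : Set S :=
  {x | ∃ n : ℕ, 0 < n ∧ ∃ a : ℕ → S, (∀ i ∈ Finset.Icc 1 n, a i ∈ I ^ i) ∧
      x ^ n + ∑ i ∈ Finset.Icc 1 n, a i * x ^ (n - i) = 0}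

section AuxIntClosure
open Polynomial

variable {S : Type*} [CommRing S] {I : Ideal S}

theorem mem_intClosure_of_isIntegral {x : S}
    (h : IsIntegral (reesAlgebra I) ((monomial 1 x : S[X]))) : x ∈ I.intClosure := by
  obtain ⟨p, hmon, heval⟩ := h
  rcases subsingleton_or_nontrivial S with hS | hS
  · exact ⟨1, one_pos, fun _ => 0, fun i _ => Submodule.zero_mem _, Subsingleton.elim _ _⟩
  set n := p.natDegree with hn'
  have hn : 0 < n := by
    rcases Nat.eq_zero_or_pos n with h0 | h0
    · exfalso
      have : p = 1 := hmon.natDegree_eq_zero.mp h0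
      rw [← aeval_def, this, map_one] at heval
      exact one_ne_zero heval
    · exact h0
  rw [← aeval_def, aeval_eq_sum_range] at heval
  have heval' : ∑ i ∈ Finset.range (n + 1), (p.coeff i : S[X]) * monomial i (x ^ i) = 0 := by
    rw [← heval]
    refine Finset.sum_congr rfl fun i _ => ?_
    rw [Algebra.smul_def, monomial_pow, one_mul]
    rfl
  have heval2 : ∑ i ∈ Finset.range (n + 1),
      ((p.coeff i : S[X]) * monomial i (x ^ i)).coeff n = 0 := by
    rw [← finset_sum_coeff, heval', coeff_zero]
  have hterm : ∀ i ∈ Finset.range (n + 1),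
      ((p.coeff i : S[X]) * monomial i (x ^ i)).coeff n
        = ((p.coeff i : S[X])).coeff (n - i) * x ^ i := by
    intro i hi
    have hle : i ≤ n := Nat.lt_succ_iff.mp (Finset.mem_range.mp hi)
    rw [← Nat.sub_add_cancel hle, coeff_mul_monomial]
    rw [Nat.sub_add_cancel hle]
  rw [Finset.sum_congr rfl hterm, Finset.sum_range_succ] at heval2
  have hlast : ((p.coeff n : S[X])).coeff (n - n) * x ^ n = x ^ n := by
    have : p.coeff n = 1 := hmon.coeff_natDegree
    rw [this, Nat.sub_self]
    simp
  rw [hlast] at heval2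
  refine ⟨n, hn, fun j => ((p.coeff (n - j) : S[X])).coeff j, fun j _ => (p.coeff (n - j)).2 j, ?_⟩
  rw [add_comm] at heval2
  rw [← heval2]
  congr 1
  refine Finset.sum_nbij' (fun j => n - j) (fun i => n - i) ?_ ?_ ?_ ?_ ?_
  · intro j hj
    obtain ⟨h1, h2⟩ := Finset.mem_Icc.mp hj
    exact Finset.mem_range.mpr (Nat.sub_lt hn h1)
  · intro i hi
    have := Finset.mem_range.mp hi
    exact Finset.mem_Icc.mpr ⟨Nat.le_sub_of_add_le (by omega), Nat.sub_le _ _⟩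
  · intro j hj
    obtain ⟨h1, h2⟩ := Finset.mem_Icc.mp hj
    show n - (n - j) = j
    omega
  · intro i hi
    have := Finset.mem_range.mp hi
    show n - (n - i) = i
    omega
  · intro j hj
    obtain ⟨h1, h2⟩ := Finset.mem_Icc.mp hj
    show _ = (↑(p.coeff (n - j)) : S[X]).coeff (n - (n - j)) * x ^ (n - j)
    rw [Nat.sub_sub_self h2]

set_option synthInstance.maxHeartbeats 800000 in
theorem isIntegral_of_mem_intClosure {x : S} (h : x ∈ I.intClosure) :
    IsIntegral (reesAlgebra I) ((monomial 1 x : S[X])) := by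
  obtain ⟨n, hn, a, ha, heq⟩ := h
  set c : {i // i ∈ Finset.Icc 1 n} → reesAlgebra I :=
    fun i => ⟨monomial i.1 (a i.1), reesAlgebra.monomial_mem.mpr (ha i.1 i.2)⟩ with hc
  refine ⟨X ^ n + ∑ i ∈ (Finset.Icc 1 n).attach, C (c i) * X ^ (n - i.1), ?_, ?_⟩
  · apply monic_X_pow_add
    refine lt_of_le_of_lt (degree_sum_le _ _) ?_
    rw [Finset.sup_lt_iff (by exact_mod_cast WithBot.bot_lt_coe n)]
    intro i _
    refine lt_of_le_of_lt (degree_mul_le _ _) ?_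
    refine lt_of_le_of_lt (add_le_add degree_C_le (degree_X_pow_le _)) ?_
    rw [zero_add]
    exact_mod_cast WithBot.coe_lt_coe.mpr (Nat.sub_lt_of_pos_le (Finset.mem_Icc.mp i.2).1
      (Finset.mem_Icc.mp i.2).2)
  · have key : ∀ i : {i // i ∈ Finset.Icc 1 n},
        (aeval (monomial 1 x : S[X])) (C (c i) * X ^ (n - i.1))
          = monomial n (a i.1 * x ^ (n - i.1)) := by
      intro i
      obtain ⟨h1, h2⟩ := Finset.mem_Icc.mp i.2
      rw [map_mul, aeval_C, map_pow, aeval_X]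
      show (monomial i.1 (a i.1) : S[X]) * _ = _
      rw [monomial_pow, one_mul, monomial_mul_monomial, Nat.add_sub_cancel' h2]
    rw [← aeval_def, map_add, map_pow, aeval_X, map_sum]
    simp_rw [key]
    rw [monomial_pow, one_mul, Finset.sum_attach (Finset.Icc 1 n)
      (fun i => (monomial n (a i * x ^ (n - i)) : S[X])),
      ← map_sum, ← map_add, heq, monomial_zero_right]

theorem Ideal.intClosure.add_mem {x y : S} (hx : x ∈ I.intClosure) (hy : y ∈ I.intClosure) :
    x + y ∈ I.intClosure := by
  apply mem_intClosure_of_isIntegral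
  have := (isIntegral_of_mem_intClosure hx).add (isIntegral_of_mem_intClosure hy)
  rwa [← (monomial 1).map_add] at this

theorem Ideal.intClosure.smul_mem (b : S) {x : S} (hx : x ∈ I.intClosure) :
    b * x ∈ I.intClosure := by
  apply mem_intClosure_of_isIntegral
  have hb : IsIntegral (reesAlgebra I) (C b : S[X]) :=
    ⟨X - C ⟨C b, (reesAlgebra I).algebraMap_mem b⟩, monic_X_sub_C _, by
      simp only [eval₂_sub, eval₂_X, eval₂_C]
      exact sub_eq_zero.mpr rfl⟩
  have := hb.mul (isIntegral_of_mem_intClosure hx)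
  rwa [C_mul_monomial] at this

theorem Ideal.subset_intClosure : (I : Set S) ⊆ I.intClosure := by
  intro x hx
  refine ⟨1, one_pos, fun _ => -x, fun i hi => ?_, by simp⟩
  obtain ⟨h1, h2⟩ := Finset.mem_Icc.mp hi
  obtain rfl : i = 1 := le_antisymm h2 h1
  rw [pow_one]
  exact neg_mem hx

end AuxIntClosure

variable (R A B : Type*) [CommRing R] [CommRing A] [CommRing B]
  [Algebra R A] [Algebra R B] [Algebra A B] [IsScalarTower R A B]

/-- The diagonal map `b ↦ b ⊗ 1 - 1 ⊗ b`. -/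
noncomputable def lipDelta (b : B) : B ⊗[R] B := b ⊗ₜ[R] 1 - 1 ⊗ₜ[R] b

/-- The canonical morphism `B ⊗[R] B → B ⊗[A] B`. -/
noncomputable def lipPhi : B ⊗[R] B →ₐ[R] B ⊗[A] B :=
  Algebra.TensorProduct.lift
    ((Algebra.TensorProduct.includeLeft : B →ₐ[A] B ⊗[A] B).restrictScalars R)
    ((Algebra.TensorProduct.includeRight : B →ₐ[A] B ⊗[A] B).restrictScalars R)
    (fun _ _ => Commute.all _ _)

/-- The relative Lipschitz saturation of `A` in `B` over `R`. -/
noncomputable def lipSat : Set B :=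
  {x | lipDelta R B x ∈ (RingHom.ker (lipPhi R A B)).intClosure}

theorem lipDelta_add (x y : B) :
    lipDelta R B (x + y) = lipDelta R B x + lipDelta R B y := by
  simp only [lipDelta, TensorProduct.add_tmul, TensorProduct.tmul_add]
  abel

theorem lipDelta_mul (x y : B) : lipDelta R B (x * y)
    = (x ⊗ₜ[R] 1) * lipDelta R B y + (1 ⊗ₜ[R] y) * lipDelta R B x := by
  simp only [lipDelta, mul_sub, Algebra.TensorProduct.tmul_mul_tmul, mul_one, one_mul]
  rw [mul_comm y x]
  abel

theorem algebraMap_mem_lipSat (a : A) : algebraMap A B a ∈ lipSat R A B := by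
  show lipDelta R B (algebraMap A B a) ∈ (RingHom.ker (lipPhi R A B)).intClosure
  apply Ideal.subset_intClosure
  show lipDelta R B (algebraMap A B a) ∈ RingHom.ker (lipPhi R A B)
  rw [RingHom.mem_ker]
  simp only [lipDelta, lipPhi, map_sub, Algebra.TensorProduct.lift_tmul,
    AlgHom.coe_restrictScalars', Algebra.TensorProduct.includeLeft_apply,
    Algebra.TensorProduct.includeRight_apply, Algebra.TensorProduct.tmul_mul_tmul,
    mul_one, one_mul]
  rw [Algebra.algebraMap_eq_smul_one, TensorProduct.smul_tmul, sub_self]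

noncomputable def lipSatSubalgebra : Subalgebra R B where
  carrier := lipSat R A B
  add_mem' {x y} hx hy := by
    show lipDelta R B (x + y) ∈ (RingHom.ker (lipPhi R A B)).intClosure
    rw [lipDelta_add]
    exact Ideal.intClosure.add_mem hx hy
  mul_mem' {x y} hx hy := by
    show lipDelta R B (x * y) ∈ (RingHom.ker (lipPhi R A B)).intClosure
    rw [lipDelta_mul]
    exact Ideal.intClosure.add_mem (Ideal.intClosure.smul_mem _ hy)
      (Ideal.intClosure.smul_mem _ hx)
  one_mem' := by
    show lipDelta R B 1 ∈ (RingHom.ker (lipPhi R A B)).intClosure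
    have h1 : lipDelta R B 1 = 0 := sub_self _
    rw [h1]
    exact Ideal.subset_intClosure (Ideal.zero_mem _)
  algebraMap_mem' r := by
    show algebraMap R B r ∈ lipSat R A B
    rw [IsScalarTower.algebraMap_apply R A B]
    exact algebraMap_mem_lipSat R A B _

/-- The relative Lipschitz saturation `A*_{B,R}` is an `R`-subalgebra of `B`
containing `g(A)`. -/
theorem lipSat_isSubalgebra :
    ∃ S : Subalgebra R B, (S : Set B) = lipSat R A B ∧
      Set.range (algebraMap A B) ⊆ (S : Set B) := by
  refine ⟨lipSatSubalgebra R A B, rfl, ?_⟩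
  rintro _ ⟨a, rfl⟩
  exact algebraMap_mem_lipSat R A B a
end

section
/- If A ⊆ C ⊆ B is a chain of R-subalgebra inclusions, then A*_{B,R} ⊆ C*_{B,R}. -/
open TensorProduct
set_option maxHeartbeats 1000000

variable (R A B : Type*) [CommRing R] [CommRing A] [CommRing B]
  [Algebra R A] [Algebra R B] [Algebra A B] [IsScalarTower R A B]

/-- If `A ⊆ C ⊆ B` is a chain of `R`-subalgebras of `B`, then
`A*_{B,R} ⊆ C*_{B,R}`. -/
theorem lipSat_mono_of_le {R' B' : Type*} [CommRing R'] [CommRing B'] [Algebra R' B']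
    (A' C' : Subalgebra R' B') (hAC : A' ≤ C') :
    lipSat R' A' B' ⊆ lipSat R' C' B' := by
  letI : Algebra A' C' := (Subalgebra.inclusion hAC).toAlgebra
  haveI : IsScalarTower ↥A' ↥C' B' :=
    IsScalarTower.of_algebraMap_eq fun a => rfl
  let ψ : B' ⊗[↥A'] B' →ₐ[↥A'] B' ⊗[↥C'] B' :=
    Algebra.TensorProduct.lift
      ((Algebra.TensorProduct.includeLeft : B' →ₐ[↥A'] B' ⊗[↥C'] B'))
      (@AlgHom.restrictScalars ↥A' ↥C' B' (B' ⊗[↥C'] B') _ _ _ _ _ _ _ _ _ _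
        (IsScalarTower.of_algebraMap_eq fun a => rfl)
        (Algebra.TensorProduct.includeRight : B' →ₐ[↥C'] B' ⊗[↥C'] B'))
      (fun _ _ => Commute.all _ _)
  have key : ∀ y : B' ⊗[R'] B', ψ (lipPhi R' A' B' y) = lipPhi R' C' B' y := by
    intro y
    induction y using TensorProduct.induction_on with
    | zero => simp
    | tmul b1 b2 =>
        simp [lipPhi, Algebra.TensorProduct.lift_tmul, ψ]
        erw [Algebra.TensorProduct.lift_tmul]
        show (b1 ⊗ₜ[↥C'] (1 : B')) * ((1 : B') ⊗ₜ[↥C'] b2) = b1 ⊗ₜ[↥C'] b2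
        simp
    | add p q hp hq => simp [map_add, hp, hq]
  have hker : RingHom.ker (lipPhi R' A' B') ≤ RingHom.ker (lipPhi R' C' B') := by
    intro y hy
    have hy' : lipPhi R' A' B' y = 0 := hy
    have := key y
    rw [hy', map_zero] at this
    exact this.symm
  intro x hx
  obtain ⟨n, hn, a, ha, hx⟩ := hx
  exact ⟨n, hn, a, fun i hi => Ideal.pow_right_mono hker i (ha i hi), hx⟩
end

section
/- If A is an R-subalgebra of B, then the relative Lipschitz saturation is idempotent: (A*_{B,R})*_{B,R} = A*_{B,R}. -/
open TensorProduct

namespace LipAux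

open Polynomial

set_option maxHeartbeats 1000000
set_option synthInstance.maxHeartbeats 400000

variable {S : Type*} [CommRing S]

theorem mem_intClosure_iff (I : Ideal S) (x : S) :
    x ∈ I.intClosure ↔ IsIntegral (reesAlgebra I) ((monomial 1 x : S[X])) := by
  constructor
  · rintro ⟨n, hn, a, ha, heq⟩
    set a' : ℕ → S := fun i => if i ∈ Finset.Icc 1 n then a i else 0 with ha'def
    have ha' : ∀ i, a' i ∈ I ^ i := by
      intro i
      by_cases h : i ∈ Finset.Icc 1 n
      · simpa only [ha'def, if_pos h] using ha i h
      · simp only [ha'def, if_neg h]; exact zero_mem _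
    have heq' : x ^ n + ∑ i ∈ Finset.Icc 1 n, a' i * x ^ (n - i) = 0 := by
      rw [← heq]
      congr 1
      exact Finset.sum_congr rfl fun i hi => by simp only [ha'def, if_pos hi]
    set c : ℕ → reesAlgebra I := fun i => ⟨monomial i (a' i),
      reesAlgebra.monomial_mem.mpr (ha' i)⟩ with hcdef
    refine ⟨X ^ n + ∑ i ∈ Finset.Icc 1 n, C (c i) * X ^ (n - i), ?_, ?_⟩
    · apply monic_X_pow_add
      refine lt_of_le_of_lt (Polynomial.degree_sum_le _ _) ?_
      rw [Finset.sup_lt_iff (by exact_mod_cast WithBot.bot_lt_coe n)]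
      intro i hi
      refine lt_of_le_of_lt (degree_C_mul_X_pow_le _ _) ?_
      exact_mod_cast Nat.sub_lt_of_pos_le (Finset.mem_Icc.mp hi).1 (Finset.mem_Icc.mp hi).2
    · rw [eval₂_add, eval₂_X_pow, eval₂_finset_sum]
      have h1 : ∀ k : ℕ, (monomial 1 x : S[X]) ^ k = monomial k (x ^ k) := fun k => by
        rw [monomial_pow, one_mul]
      have h2 : ∀ i ∈ Finset.Icc 1 n,
          eval₂ (algebraMap (reesAlgebra I) S[X]) (monomial 1 x) (C (c i) * X ^ (n - i))
            = monomial n (a' i * x ^ (n - i)) := by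
        intro i hi
        obtain ⟨hi1, hi2⟩ := Finset.mem_Icc.mp hi
        have hmap : (algebraMap (reesAlgebra I) S[X]) (c i) = monomial i (a' i) := rfl
        have h3 : i + (n - i) = n := by omega
        rw [eval₂_mul, eval₂_C, eval₂_X_pow, h1, hmap, monomial_mul_monomial, h3]
      rw [Finset.sum_congr rfl h2, h1, ← map_sum, ← map_add, heq', monomial_zero_right]
  · rintro ⟨p, pmonic, hp⟩
    by_cases htriv : (1 : S) = 0
    · haveI : Subsingleton S := subsingleton_of_zero_eq_one htriv.symm
      exact ⟨1, one_pos, fun _ => 0, fun i _ => zero_mem _, Subsingleton.elim _ _⟩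
    haveI : Nontrivial S := nontrivial_of_ne 1 0 htriv
    set n := p.natDegree with hndef
    have hn : 0 < n := by
      rcases Nat.eq_zero_or_pos n with h | h
      · exfalso
        have hp1 : p = 1 := pmonic.natDegree_eq_zero.mp h
        rw [hp1, eval₂_one] at hp
        exact one_ne_zero hp
      · exact h
    have h1 : ∀ k : ℕ, (monomial 1 x : S[X]) ^ k = monomial k (x ^ k) := fun k => by
      rw [monomial_pow, one_mul]
    have hcoe : ∀ z : reesAlgebra I, (algebraMap (reesAlgebra I) S[X]) z = (z : S[X]) :=
      fun z => rfl
    have key : (0 : S) = ∑ i ∈ Finset.range (n + 1),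
        ((p.coeff i : S[X])).coeff (n - i) * x ^ i := by
      have h0 : (0 : S) = Polynomial.coeff (0 : S[X]) n := by simp
      rw [h0, ← hp, eval₂_eq_sum_range, finset_sum_coeff]
      refine Finset.sum_congr rfl fun i hi => ?_
      have hile : i ≤ n := Nat.lt_succ_iff.mp (Finset.mem_range.mp hi)
      have hsplit : n = (n - i) + i := by omega
      rw [hcoe, h1]
      conv_lhs => rw [hsplit]
      exact coeff_mul_monomial _ _ _ _
    refine ⟨n, hn, fun j => ((p.coeff (n - j) : S[X])).coeff j, fun j _ => ?_, ?_⟩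
    · exact (mem_reesAlgebra_iff I _).mp (p.coeff (n - j)).2 j
    · have hlead : ((p.coeff n : S[X])).coeff 0 = 1 := by
        have : p.coeff n = 1 := pmonic.coeff_natDegree
        rw [this]
        simp
      rw [Finset.sum_range_succ, Nat.sub_self, hlead, one_mul] at key
      have hre : ∑ i ∈ Finset.range n, ((p.coeff i : S[X])).coeff (n - i) * x ^ i
          = ∑ j ∈ Finset.Icc 1 n, ((p.coeff (n - j) : S[X])).coeff j * x ^ (n - j) := by
        refine Finset.sum_bij' (fun i _ => n - i) (fun j _ => n - j) ?_ ?_ ?_ ?_ ?_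
        · intro i hi
          have := Finset.mem_range.mp hi
          simp only [Finset.mem_Icc]
          omega
        · intro j hj
          have := Finset.mem_Icc.mp hj
          simp only [Finset.mem_range]
          omega
        · intro i hi
          have := Finset.mem_range.mp hi
          show n - (n - i) = i
          omega
        · intro j hj
          have := Finset.mem_Icc.mp hj
          show n - (n - j) = j
          omega
        · intro i hi
          have := Finset.mem_range.mp hi
          have h4 : n - (n - i) = i := by omega
          rw [h4]
      rw [hre] at key
      show x ^ n + ∑ j ∈ Finset.Icc 1 n, ((p.coeff (n - j) : S[X])).coeff j * x ^ (n - j) = 0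
      rw [add_comm]
      exact key.symm

theorem subset_intClosure (I : Ideal S) (x : S) (hx : x ∈ I) : x ∈ I.intClosure := by
  refine ⟨1, one_pos, fun _ => -x, ?_, ?_⟩
  · intro i hi
    have : i = 1 := by simpa using hi
    subst this
    simpa using neg_mem hx
  · simp

theorem intClosure_mono {I J : Ideal S} (h : I ≤ J) : I.intClosure ⊆ J.intClosure := by
  rintro x ⟨n, hn, a, ha, he⟩
  exact ⟨n, hn, a, fun i hi => Ideal.pow_right_mono h i (ha i hi), he⟩

theorem intClosure_span_le (G : Set S) (I : Ideal S) (hG : ∀ g ∈ G, g ∈ I.intClosure) :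
    (Ideal.span G).intClosure ⊆ I.intClosure := by
  intro x hx
  rw [mem_intClosure_iff] at hx ⊢
  set CC := integralClosure (reesAlgebra I) S[X] with hCC
  have hconst : ∀ s : S, (Polynomial.C s) ∈ CC := by
    intro s
    have hmem : (Polynomial.C s : S[X]) ∈ reesAlgebra I := by
      rw [mem_reesAlgebra_iff]
      intro i
      cases i with
      | zero => simp [Polynomial.coeff_C]
      | succ k => simp [Polynomial.coeff_C]
    exact CC.algebraMap_mem (⟨Polynomial.C s, hmem⟩ : reesAlgebra I)
  have hmono : ∀ z ∈ Ideal.span G, (Polynomial.monomial 1 z : S[X]) ∈ CC := by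
    intro z hz
    refine Submodule.span_induction ?_ ?_ ?_ ?_ hz
    · intro g hg
      exact (mem_intClosure_iff I g).mp (hG g hg)
    · simpa using zero_mem CC
    · intro u _ v _ hu hv
      rw [map_add]
      exact add_mem hu hv
    · intro c u _ hu
      have : Polynomial.monomial 1 (c • u) = Polynomial.C c * Polynomial.monomial 1 u := by
        rw [Polynomial.C_mul_monomial, smul_eq_mul]
      rw [this]
      exact mul_mem (hconst c) hu
  have hrees : ∀ q ∈ reesAlgebra (Ideal.span G), q ∈ CC := by
    intro q hq
    rw [← adjoin_monomial_eq_reesAlgebra] at hq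
    have hle : Algebra.adjoin S
        ((Submodule.map (Polynomial.monomial 1 : S →ₗ[S] S[X]) (Ideal.span G)) : Set S[X]) ≤
        CC.restrictScalars S := by
      apply Algebra.adjoin_le
      rintro _ ⟨z, hz, rfl⟩
      exact hmono z hz
    exact (Subalgebra.mem_restrictScalars S).mp (hle hq)
  obtain ⟨p, pm, hp⟩ := hx
  let ι : reesAlgebra (Ideal.span G) →+* CC :=
    { toFun := fun g => ⟨g.1, hrees g.1 g.2⟩
      map_one' := rfl
      map_mul' := fun _ _ => rfl
      map_zero' := rfl
      map_add' := fun _ _ => rfl }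
  have hcomp : (algebraMap CC S[X]).comp ι = algebraMap (reesAlgebra (Ideal.span G)) S[X] := rfl
  have hint : IsIntegral CC (Polynomial.monomial 1 x) := by
    refine ⟨p.map ι, pm.map ι, ?_⟩
    rw [Polynomial.eval₂_map, hcomp]
    exact hp
  exact isIntegral_trans _ hint


end LipAux

variable (R A B : Type*) [CommRing R] [CommRing A] [CommRing B]
  [Algebra R A] [Algebra R B] [Algebra A B] [IsScalarTower R A B]

set_option maxHeartbeats 1000000
set_option synthInstance.maxHeartbeats 400000

theorem lipPhi_tmul (a b : B) : lipPhi R A B (a ⊗ₜ[R] b) = a ⊗ₜ[A] b := by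
  unfold lipPhi
  rw [Algebra.TensorProduct.lift_tmul]
  show (a ⊗ₜ[A] 1) * (1 ⊗ₜ[A] b) = a ⊗ₜ[A] b
  rw [Algebra.TensorProduct.tmul_mul_tmul, mul_one, one_mul]

theorem lipKer_eq_span {R B : Type*} [CommRing R] [CommRing B] [Algebra R B]
    (T : Subalgebra R B) :
    RingHom.ker (lipPhi R T B) = Ideal.span (lipDelta R B '' (T : Set B)) := by
  set J := Ideal.span (lipDelta R B '' (T : Set B)) with hJ
  have hdelta0 : ∀ t : B, t ∈ T → lipPhi R T B (lipDelta R B t) = 0 := by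
    intro t ht
    have ht' : ((⟨t, ht⟩ : T) • (1 : B)) = t := by
      rw [Algebra.smul_def, mul_one]
      rfl
    have h1 : t ⊗ₜ[T] (1 : B) = (1 : B) ⊗ₜ[T] t := by
      calc t ⊗ₜ[T] (1 : B) = ((⟨t, ht⟩ : T) • (1 : B)) ⊗ₜ[T] (1 : B) := by rw [ht']
        _ = (1 : B) ⊗ₜ[T] ((⟨t, ht⟩ : T) • (1 : B)) := TensorProduct.smul_tmul _ _ _
        _ = (1 : B) ⊗ₜ[T] t := by rw [ht']
    rw [lipDelta, map_sub, lipPhi_tmul, lipPhi_tmul, h1, sub_self]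
  apply le_antisymm
  · -- ker ≤ span
    let Q := (B ⊗[R] B) ⧸ J
    let mkQ : B ⊗[R] B →+* Q := Ideal.Quotient.mk J
    let f₀ : B →+* Q :=
      mkQ.comp (Algebra.TensorProduct.includeLeftRingHom (R := R) (A := B) (B := B))
    let g₀ : B →+* Q :=
      mkQ.comp (Algebra.TensorProduct.includeRight (R := R) (A := B) (B := B)).toRingHom
    have gcomm : ∀ s : T, g₀ ((algebraMap T B) s) = algebraMap T Q s := by
      intro s
      show mkQ ((1 : B) ⊗ₜ[R] (s : B)) = mkQ ((s : B) ⊗ₜ[R] (1 : B))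
      rw [Ideal.Quotient.mk_eq_mk_iff_sub_mem]
      have hd : (1 : B) ⊗ₜ[R] (s : B) - (s : B) ⊗ₜ[R] (1 : B) = -(lipDelta R B (s : B)) := by
        rw [lipDelta, neg_sub]
      rw [hd]
      exact neg_mem (Ideal.subset_span ⟨(s : B), s.2, rfl⟩)
    let f : B →ₐ[T] Q := { toRingHom := f₀, commutes' := fun s => rfl }
    let g : B →ₐ[T] Q := { toRingHom := g₀, commutes' := gcomm }
    let ψ : B ⊗[T] B →ₐ[T] Q := Algebra.TensorProduct.lift f g fun _ _ => Commute.all _ _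
    have key : ∀ ξ : B ⊗[R] B, ψ (lipPhi R T B ξ) = mkQ ξ := by
      intro ξ
      induction ξ using TensorProduct.induction_on with
      | zero => simp
      | tmul a b =>
        rw [lipPhi_tmul]
        show mkQ (a ⊗ₜ[R] 1) * mkQ (1 ⊗ₜ[R] b) = mkQ (a ⊗ₜ[R] b)
        rw [← map_mul, Algebra.TensorProduct.tmul_mul_tmul, mul_one, one_mul]
      | add u v hu hv => rw [map_add, map_add, hu, hv, map_add]
    intro ξ hξ
    rw [RingHom.mem_ker] at hξ
    have h := key ξ
    rw [hξ, map_zero] at h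
    exact (Ideal.Quotient.eq_zero_iff_mem).mp h.symm
  · -- span ≤ ker
    rw [hJ, Ideal.span_le]
    rintro _ ⟨t, ht, rfl⟩
    exact hdelta0 t ht

/-- Idempotency of the relative Lipschitz saturation: if `A` is an `R`-subalgebra of
`B` and `S` is the `R`-subalgebra of `B` whose underlying set is `A*_{B,R}`, then
`S*_{B,R} = A*_{B,R}`, i.e. `(A*)* = A*`. -/
theorem lipSat_idem {R' B' : Type*} [CommRing R'] [CommRing B'] [Algebra R' B']
    (A' : Subalgebra R' B') (S : Subalgebra R' B') (hS : (S : Set B') = lipSat R' A' B') :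
    lipSat R' S B' = lipSat R' A' B' := by
  have hKA : RingHom.ker (lipPhi R' A' B') = Ideal.span (lipDelta R' B' '' (A' : Set B')) :=
    lipKer_eq_span A'
  have hKS : RingHom.ker (lipPhi R' S B') = Ideal.span (lipDelta R' B' '' (S : Set B')) :=
    lipKer_eq_span S
  have hsub : (A' : Set B') ⊆ (S : Set B') := by
    rw [hS]
    intro a ha
    show lipDelta R' B' a ∈ (RingHom.ker (lipPhi R' A' B')).intClosure
    refine LipAux.subset_intClosure _ _ ?_
    rw [hKA]
    exact Ideal.subset_span ⟨a, ha, rfl⟩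
  apply Set.Subset.antisymm
  · intro x hx
    have hx' : lipDelta R' B' x ∈ (RingHom.ker (lipPhi R' S B')).intClosure := hx
    rw [hKS] at hx'
    show lipDelta R' B' x ∈ (RingHom.ker (lipPhi R' A' B')).intClosure
    refine LipAux.intClosure_span_le _ _ ?_ hx'
    rintro _ ⟨s, hs, rfl⟩
    have hs' : s ∈ lipSat R' A' B' := hS ▸ hs
    exact hs'
  · intro x hx
    have hx' : lipDelta R' B' x ∈ (RingHom.ker (lipPhi R' A' B')).intClosure := hx
    show lipDelta R' B' x ∈ (RingHom.ker (lipPhi R' S B')).intClosure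
    refine LipAux.intClosure_mono ?_ hx'
    rw [hKA, hKS]
    exact Ideal.span_mono (Set.image_mono hsub)
end

section
/- Functoriality of Lipschitz saturation: given a commutative diagram of ring morphisms with rows R → A →g B and R' → A' →g' B' and vertical maps f_R : R → R', f_A : A → A', f : B → B' making everything commute, one has f(A*_{B,R}) ⊆ (A')*_{B',R'}. -/
open TensorProduct

variable (R A B : Type*) [CommRing R] [CommRing A] [CommRing B]
  [Algebra R A] [Algebra R B] [Algebra A B] [IsScalarTower R A B]

/-- Functoriality of the relative Lipschitz saturation: a commutative diagram of ring
morphisms between the sequences `R → A → B` and `R' → A' → B'` maps `A*_{B,R}`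
into `(A')*_{B',R'}`. -/
theorem lipSat_functorial (R' A' B' : Type*) [CommRing R'] [CommRing A'] [CommRing B']
    [Algebra R' A'] [Algebra R' B'] [Algebra A' B'] [IsScalarTower R' A' B']
    (fR : R →+* R') (fA : A →+* A') (f : B →+* B')
    (h₁ : fA.comp (algebraMap R A) = (algebraMap R' A').comp fR)
    (h₂ : f.comp (algebraMap A B) = (algebraMap A' B').comp fA) :
    f '' lipSat R A B ⊆ lipSat R' A' B' := by
  rintro _ ⟨x, hx, rfl⟩
  have hfA : ∀ a : A, f (algebraMap A B a) = algebraMap A' B' (fA a) := fun a =>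
    congrArg (fun g : A →+* B' => g a) h₂
  have hfR : ∀ r : R, f (algebraMap R B r) = algebraMap R' B' (fR r) := by
    intro r
    have h1r : fA (algebraMap R A r) = algebraMap R' A' (fR r) :=
      congrArg (fun g : R →+* A' => g r) h₁
    rw [IsScalarTower.algebraMap_apply R A B, hfA, h1r, ← IsScalarTower.algebraMap_apply]
  letI instRT : Algebra R (B' ⊗[R'] B') :=
    ((algebraMap R' (B' ⊗[R'] B')).comp fR).toAlgebra
  letI instAT : Algebra A (B' ⊗[A'] B') :=
    ((algebraMap A' (B' ⊗[A'] B')).comp fA).toAlgebra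
  let g1 : B →ₐ[R] B' ⊗[R'] B' :=
    { toRingHom := Algebra.TensorProduct.includeLeftRingHom.comp f
      commutes' := fun r => by
        show Algebra.TensorProduct.includeLeftRingHom (f (algebraMap R B r)) = _
        simp [RingHom.algebraMap_toAlgebra, hfR r, Algebra.TensorProduct.algebraMap_apply] }
  let g2 : B →ₐ[R] B' ⊗[R'] B' :=
    { toRingHom := (Algebra.TensorProduct.includeRight :
        B' →ₐ[R'] B' ⊗[R'] B').toRingHom.comp f
      commutes' := fun r => by
        show (Algebra.TensorProduct.includeRight : B' →ₐ[R'] B' ⊗[R'] B')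
          (f (algebraMap R B r)) = _
        simp [RingHom.algebraMap_toAlgebra, hfR r] }
  let F : B ⊗[R] B →ₐ[R] B' ⊗[R'] B' :=
    Algebra.TensorProduct.lift g1 g2 (fun _ _ => Commute.all _ _)
  let k1 : B →ₐ[A] B' ⊗[A'] B' :=
    { toRingHom := Algebra.TensorProduct.includeLeftRingHom.comp f
      commutes' := fun a => by
        show Algebra.TensorProduct.includeLeftRingHom (f (algebraMap A B a)) = _
        simp [RingHom.algebraMap_toAlgebra, hfA a, Algebra.TensorProduct.algebraMap_apply] }
  let k2 : B →ₐ[A] B' ⊗[A'] B' :=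
    { toRingHom := (Algebra.TensorProduct.includeRight :
        B' →ₐ[A'] B' ⊗[A'] B').toRingHom.comp f
      commutes' := fun a => by
        show (Algebra.TensorProduct.includeRight : B' →ₐ[A'] B' ⊗[A'] B')
          (f (algebraMap A B a)) = _
        simp [RingHom.algebraMap_toAlgebra, hfA a] }
  let G : B ⊗[A] B →ₐ[A] B' ⊗[A'] B' :=
    Algebra.TensorProduct.lift k1 k2 (fun _ _ => Commute.all _ _)
  have hF : ∀ b c : B, F (b ⊗ₜ[R] c) = f b ⊗ₜ[R'] f c := by
    intro b c
    simp [F, g1, g2, Algebra.TensorProduct.lift_tmul, Algebra.TensorProduct.tmul_mul_tmul]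
  have hG : ∀ b c : B, G (b ⊗ₜ[A] c) = f b ⊗ₜ[A'] f c := by
    intro b c
    simp [G, k1, k2, Algebra.TensorProduct.lift_tmul, Algebra.TensorProduct.tmul_mul_tmul]
  have hPhi : ∀ b c : B, lipPhi R A B (b ⊗ₜ[R] c) = b ⊗ₜ[A] c := by
    intro b c
    simp [lipPhi, Algebra.TensorProduct.lift_tmul, Algebra.TensorProduct.tmul_mul_tmul]
  have hPhi' : ∀ b c : B', lipPhi R' A' B' (b ⊗ₜ[R'] c) = b ⊗ₜ[A'] c := by
    intro b c
    simp [lipPhi, Algebra.TensorProduct.lift_tmul, Algebra.TensorProduct.tmul_mul_tmul]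
  have hcomm : ∀ y : B ⊗[R] B, lipPhi R' A' B' (F y) = G (lipPhi R A B y) := by
    intro y
    induction y using TensorProduct.induction_on with
    | zero => simp
    | tmul b c => rw [hF, hPhi', hPhi, hG]
    | add u v hu hv => simp [map_add, hu, hv]
  have hker : ∀ y ∈ RingHom.ker (lipPhi R A B), F y ∈ RingHom.ker (lipPhi R' A' B') := by
    intro y hy
    rw [RingHom.mem_ker] at hy ⊢
    rw [hcomm, hy, map_zero]
  have hpow : ∀ i : ℕ, ∀ y ∈ (RingHom.ker (lipPhi R A B)) ^ i,
      F y ∈ (RingHom.ker (lipPhi R' A' B')) ^ i := by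
    intro i y hy
    have hle : Ideal.map (F : B ⊗[R] B →+* B' ⊗[R'] B')
        ((RingHom.ker (lipPhi R A B)) ^ i) ≤ (RingHom.ker (lipPhi R' A' B')) ^ i := by
      rw [Ideal.map_pow]
      exact Ideal.pow_right_mono (Ideal.map_le_iff_le_comap.mpr fun z hz => Ideal.mem_comap.mpr (hker z hz)) i
    exact hle (Ideal.mem_map_of_mem _ hy)
  have hdelta : F (lipDelta R B x) = lipDelta R' B' (f x) := by
    simp only [lipDelta, map_sub, hF, map_one]
  obtain ⟨n, hn, a, ha, heq⟩ := hx
  refine ⟨n, hn, fun i => F (a i), fun i hi => hpow i _ (ha i hi), ?_⟩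
  have := congrArg F heq
  simpa only [map_add, map_pow, map_sum, map_mul, map_zero, hdelta] using this
end

section
/- A ring morphism h : S → T is radicial (any two distinct morphisms from T into a field have distinct compositions with h) if and only if t ⊗_S 1 − 1 ⊗_S t is nilpotent in T ⊗_S T for every t ∈ T. -/
open TensorProduct

universe v

set_option synthInstance.maxHeartbeats 1000000
set_option maxHeartbeats 1000000

/-- A ring morphism `h : S → T` is radicial (any two distinct morphisms from `T` into
a field have distinct compositions with `h`) if and only if `t ⊗ 1 - 1 ⊗ t` is
nilpotent in `T ⊗[S] T` for every `t ∈ T`. -/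
theorem radicial_iff_nilpotent_diff {S : Type*} (T : Type v) [CommRing S] [CommRing T]
    [Algebra S T] :
    (∀ (K : Type v) [Field K] (δ₁ δ₂ : T →+* K),
        δ₁.comp (algebraMap S T) = δ₂.comp (algebraMap S T) → δ₁ = δ₂) ↔
      ∀ t : T, IsNilpotent (t ⊗ₜ[S] 1 - 1 ⊗ₜ[S] t : T ⊗[S] T) := by
  constructor
  · intro h t
    by_contra hnil
    rw [nilpotent_iff_mem_prime] at hnil
    push_neg at hnil
    obtain ⟨p, hp, hmem⟩ := hnil
    haveI := hp
    haveI : IsDomain ((T ⊗[S] T) ⧸ p) := Ideal.Quotient.isDomain p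
    let K := FractionRing ((T ⊗[S] T) ⧸ p)
    let q : (T ⊗[S] T) →+* K :=
      (algebraMap ((T ⊗[S] T) ⧸ p) K).comp (Ideal.Quotient.mk p)
    let δ₁ : T →+* K := q.comp (Algebra.TensorProduct.includeLeft : T →ₐ[S] T ⊗[S] T).toRingHom
    let δ₂ : T →+* K := q.comp (Algebra.TensorProduct.includeRight : T →ₐ[S] T ⊗[S] T).toRingHom
    have hcomp : δ₁.comp (algebraMap S T) = δ₂.comp (algebraMap S T) := by
      ext s
      simp only [δ₁, δ₂, RingHom.comp_apply, AlgHom.toRingHom_eq_coe, RingHom.coe_coe]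
      rw [Algebra.TensorProduct.includeLeft.commutes, Algebra.TensorProduct.includeRight.commutes]
    have heq := h K δ₁ δ₂ hcomp
    have h1 : δ₁ t - δ₂ t = 0 := by rw [heq, sub_self]
    have h2 : q (t ⊗ₜ[S] 1 - 1 ⊗ₜ[S] t) = 0 := by
      rw [map_sub]; exact h1
    have h3 : (Ideal.Quotient.mk p) (t ⊗ₜ[S] 1 - 1 ⊗ₜ[S] t) = 0 := by
      apply IsFractionRing.injective ((T ⊗[S] T) ⧸ p) K
      rw [map_zero]
      exact h2
    exact hmem (Ideal.Quotient.eq_zero_iff_mem.mp h3)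
  · intro h K _ δ₁ δ₂ hcomp
    letI : Algebra S K := (δ₁.comp (algebraMap S T)).toAlgebra
    let e₁ : T →ₐ[S] K := { toRingHom := δ₁, commutes' := fun s => rfl }
    let e₂ : T →ₐ[S] K :=
      { toRingHom := δ₂,
        commutes' := fun s => by
          have h' : δ₂ (algebraMap S T s) = δ₁ (algebraMap S T s) := by
            rw [← RingHom.comp_apply, ← RingHom.comp_apply, hcomp]
          exact h' }
    let φ : T ⊗[S] T →ₐ[S] K :=
      Algebra.TensorProduct.lift e₁ e₂ (fun _ _ => mul_comm _ _)
    ext t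
    have hn := (h t).map φ
    have hφ : φ (t ⊗ₜ[S] 1 - 1 ⊗ₜ[S] t) = δ₁ t - δ₂ t := by
      rw [map_sub]
      change δ₁ t * δ₂ 1 - δ₁ 1 * δ₂ t = _
      simp
    rw [hφ] at hn
    exact sub_eq_zero.mp hn.eq_zero
end

section
/- Let R be a commutative ring with ideals I, J₁, …, J_n such that the product J₁⋯J_n is a nil ideal. If x ∈ R is integral over I modulo J_i for every i (i.e., the class of x in R/J_i is integral over the image of I), then x lies in the integral closure of I in R. -/
open Polynomial Finset


section Aux
variable {R : Type*} [CommRing R]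


/-- `f` looks like a "degree m" monic polynomial with `k`-th coefficient from the top in `I^k`. -/
def GoodAt (I : Ideal R) (m : ℕ) (f : R[X]) : Prop :=
  f.natDegree ≤ m ∧ f.coeff m = 1 ∧ ∀ j, f.coeff j ∈ I ^ (m - j)

lemma goodAt_one (I : Ideal R) : GoodAt I 0 (1 : R[X]) := by
  refine ⟨by simp, by simp, fun j => ?_⟩
  simp [Ideal.one_eq_top]

lemma goodAt_X (I : Ideal R) : GoodAt I 1 (X : R[X]) := by
  refine ⟨natDegree_X_le, by simp, fun j => ?_⟩
  rcases j with _ | _ | j <;> simp [coeff_X, Ideal.one_eq_top, pow_one]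

lemma GoodAt.mul {I : Ideal R} {m d : ℕ} {f g : R[X]} (hf : GoodAt I m f)
    (hg : GoodAt I d g) : GoodAt I (m + d) (f * g) := by
  obtain ⟨hfm, hf1, hfc⟩ := hf
  obtain ⟨hgm, hg1, hgc⟩ := hg
  refine ⟨natDegree_mul_le.trans (add_le_add hfm hgm), ?_, fun j => ?_⟩
  · rw [coeff_mul, Finset.sum_eq_single (m, d)]
    · simp [hf1, hg1]
    · rintro ⟨i, j⟩ hij hne
      simp only [Finset.HasAntidiagonal.mem_antidiagonal] at hij
      rcases lt_or_ge m i with h | h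
      · rw [coeff_eq_zero_of_natDegree_lt (lt_of_le_of_lt hfm h), zero_mul]
      · have hij2 : i ≠ m := by
          intro h'; exact hne (by simp [h']; omega)
        have : d < j := by omega
        rw [coeff_eq_zero_of_natDegree_lt (lt_of_le_of_lt hgm this), mul_zero]
    · intro h
      simp at h
  · rw [coeff_mul]
    refine Ideal.sum_mem _ ?_
    rintro ⟨i, j'⟩ hij
    simp only [Finset.HasAntidiagonal.mem_antidiagonal] at hij
    have h1 : f.coeff i * g.coeff j' ∈ I ^ (m - i) * I ^ (d - j') :=
      Ideal.mul_mem_mul (hfc i) (hgc j')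
    rw [← pow_add] at h1
    exact Ideal.pow_le_pow_right (by omega) h1

lemma GoodAt.pow {I : Ideal R} {m : ℕ} {f : R[X]} (hf : GoodAt I m f) (N : ℕ) :
    GoodAt I (N * m) (f ^ N) := by
  induction N with
  | zero => simpa using goodAt_one I
  | succ k ih =>
      have := ih.mul hf
      rw [← pow_succ] at this
      simpa [Nat.succ_mul] using this

lemma sum_range_eq_sum_Icc (m : ℕ) (g : ℕ → R) :
    ∑ j ∈ Finset.range m, g j = ∑ k ∈ Finset.Icc 1 m, g (m - k) := by
  refine Finset.sum_nbij' (fun j => m - j) (fun k => m - k) ?_ ?_ ?_ ?_ ?_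
  · intro a ha; simp only [Finset.mem_range] at ha; simp only [Finset.mem_Icc]; omega
  · intro a ha; simp only [Finset.mem_Icc] at ha; simp only [Finset.mem_range]; omega
  · intro a ha; simp only [Finset.mem_range] at ha; show m - (m - a) = a; omega
  · intro a ha; simp only [Finset.mem_Icc] at ha; show m - (m - a) = a; omega
  · intro a ha; simp only [Finset.mem_range] at ha; show g a = g (m - (m - a)); congr 1; omega

/-- Construction: from an integral dependence witness build a GoodAt polynomial. -/
lemma exists_goodAt {I : Ideal R} {m : ℕ} (hm : 0 < m) {a : ℕ → R}
    (ha : ∀ k ∈ Finset.Icc 1 m, a k ∈ I ^ k) (x : R) :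
    ∃ f : R[X], GoodAt I m f ∧
      f.eval x = x ^ m + ∑ k ∈ Finset.Icc 1 m, a k * x ^ (m - k) := by
  set c : ℕ → R := fun j => if j = m then 1 else a (m - j) with hc
  set f : R[X] := ∑ j ∈ Finset.range (m + 1), C (c j) * X ^ j with hf
  have hcoeff : ∀ j, f.coeff j = if j ≤ m then c j else 0 := by
    intro j
    rw [hf, finset_sum_coeff]
    simp only [coeff_C_mul, coeff_X_pow, mul_ite, mul_one, mul_zero]
    by_cases h : j ≤ m
    · rw [if_pos h, Finset.sum_eq_single j]
      · simp
      · intro b _ hb; rw [if_neg (Ne.symm hb)]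
      · intro hj; exact absurd (Finset.mem_range.mpr (by omega)) hj
    · rw [if_neg h, Finset.sum_eq_zero]
      intro b hb; simp only [Finset.mem_range] at hb
      rw [if_neg (by omega)]
  have hdeg : f.natDegree ≤ m := by
    rw [natDegree_le_iff_coeff_eq_zero]
    intro N hN; rw [hcoeff, if_neg (by omega)]
  have heval : f.eval x = x ^ m + ∑ j ∈ Finset.range m, a (m - j) * x ^ j := by
    rw [hf, eval_finset_sum (Finset.range (m + 1)) (fun j => C (c j) * X ^ j) x]
    simp only [eval_mul, eval_C, eval_pow, eval_X]
    rw [Finset.sum_range_succ]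
    have hcm : c m = 1 := by simp [hc]
    rw [hcm, one_mul, add_comm]
    congr 1
    apply Finset.sum_congr rfl
    intro j hj
    simp only [Finset.mem_range] at hj
    rw [hc]
    dsimp only
    rw [if_neg (by omega)]
  refine ⟨f, ⟨hdeg, ?_, ?_⟩, ?_⟩
  · rw [hcoeff, if_pos le_rfl, hc]; simp
  · intro j
    rw [hcoeff]
    split_ifs with h
    · rcases eq_or_lt_of_le h with h' | h'
      · simp [hc, h']
      · rw [hc]
        simp only [Nat.ne_of_lt h', if_neg]
        exact ha (m - j) (Finset.mem_Icc.mpr ⟨by omega, by omega⟩)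
    · exact zero_mem _
  · rw [heval, sum_range_eq_sum_Icc m (fun j => a (m - j) * x ^ j)]
    congr 1
    refine Finset.sum_congr rfl fun k hk => ?_
    simp only [Finset.mem_Icc] at hk
    congr 2
    omega

lemma mem_intClosure_of_goodAt {I : Ideal R} {m : ℕ} (hm : 0 < m) {f : R[X]}
    (hf : GoodAt I m f) {x : R} (hx : f.eval x = 0) : x ∈ I.intClosure := by
  obtain ⟨hdeg, h1, hc⟩ := hf
  refine ⟨m, hm, fun k => f.coeff (m - k), fun k hk => ?_, ?_⟩
  · simp only [Finset.mem_Icc] at hk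
    have := hc (m - k)
    rwa [show m - (m - k) = k by omega] at this
  · rw [eval_eq_sum_range' (lt_of_le_of_lt hdeg (Nat.lt_succ_self m)) x,
      Finset.sum_range_succ, h1, one_mul,
      sum_range_eq_sum_Icc m (fun j => f.coeff j * x ^ j)] at hx
    linear_combination hx

end Aux

/-- If `J₁ ⋯ Jₙ` is a nil ideal and `x` is integral over `I` modulo each `Jᵢ`
(i.e. there is a monic polynomial with coefficients `aₖ ∈ I^k` whose value at `x`
lies in `Jᵢ`), then `x` is integral over `I`. -/
theorem mem_intClosure_of_integral_mod {R : Type*} [CommRing R] (I : Ideal R)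
    {n : ℕ} (J : Fin n → Ideal R) (hnil : (∏ i, J i) ≤ nilradical R) (x : R)
    (hx : ∀ i, ∃ m : ℕ, 0 < m ∧ ∃ a : ℕ → R, (∀ k ∈ Finset.Icc 1 m, a k ∈ I ^ k) ∧
      x ^ m + ∑ k ∈ Finset.Icc 1 m, a k * x ^ (m - k) ∈ J i) :
    x ∈ I.intClosure := by
  choose m hm a ha hJ using hx
  have hfi : ∀ i, ∃ f : R[X], GoodAt I (m i) f ∧
      f.eval x = x ^ (m i) + ∑ k ∈ Finset.Icc 1 (m i), a i k * x ^ (m i - k) :=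
    fun i => exists_goodAt (hm i) (ha i) x
  choose f hf hfe using hfi
  have hgood : GoodAt I (∑ i, m i) (∏ i, f i) := by
    classical
    induction (Finset.univ : Finset (Fin n)) using Finset.induction with
    | empty => simpa using goodAt_one I
    | insert _ _ hni ih =>
        rw [Finset.prod_insert hni, Finset.sum_insert hni]
        exact (hf _).mul ih
  have hevalprod : (∏ i, f i).eval x ∈ ∏ i, J i := by
    rw [eval_prod]
    exact Ideal.prod_mem_prod fun i _ => by rw [hfe i]; exact hJ i
  obtain ⟨N, hN⟩ := mem_nilradical.mp (hnil hevalprod)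
  have hXg : GoodAt I (1 + N * ∑ i, m i) (X * (∏ i, f i) ^ N) :=
    (goodAt_X I).mul (hgood.pow N)
  refine mem_intClosure_of_goodAt (by omega) hXg ?_
  rw [eval_mul, eval_X, eval_pow, hN, mul_zero]
end

section
/- If h : S → T is an integral ring morphism with ker h a nil ideal of S, then for every ideal I of S, the integral closure of I in S equals h^{-1} of the integral closure of the ideal I·T in T. -/
open Polynomial

/-- Extraction: a monic polynomial over the Rees algebra killing `C x * X` gives
membership in the integral closure of the ideal. -/
lemma mem_intClosure_of_monic {S : Type*} [CommRing S] {I : Ideal S} {x : S}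
    (P : Polynomial ↥(reesAlgebra I)) (hP : P.Monic)
    (hev : Polynomial.eval₂ (algebraMap ↥(reesAlgebra I) S[X]) (C x * X) P = 0) :
    x ∈ I.intClosure := by
  set n := P.natDegree with hn
  rcases Nat.eq_zero_or_pos n with h0 | hpos
  · -- P = 1, so 1 = 0 in S[X], subsingleton
    have hP1 : P = 1 := hP.natDegree_eq_zero.mp (hn ▸ h0)
    rw [hP1, Polynomial.eval₂_one] at hev
    have h10 : (1 : S) = 0 := by
      have := congrArg (fun p => Polynomial.coeff p 0) hev
      simpa using this
    haveI : Subsingleton S := subsingleton_of_zero_eq_one h10.symm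
    exact ⟨1, one_pos, fun _ => 0, by simp, Subsingleton.elim _ _⟩
  · have hexp : Polynomial.eval₂ (algebraMap ↥(reesAlgebra I) S[X]) (C x * X) P
        = ∑ i ∈ Finset.range (n + 1),
            (algebraMap ↥(reesAlgebra I) S[X] (P.coeff i)) * (C x * X) ^ i :=
      Polynomial.eval₂_eq_sum_range _ _
    have hco : ∀ i ∈ Finset.range (n+1),
        ((algebraMap ↥(reesAlgebra I) S[X] (P.coeff i)) * (C x * X) ^ i).coeff n
        = ((P.coeff i : S[X]).coeff (n - i)) * x ^ i := by
      intro i hi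
      rw [Finset.mem_range, Nat.lt_succ_iff] at hi
      have halg : (algebraMap ↥(reesAlgebra I) S[X]) (P.coeff i) = (P.coeff i : S[X]) := rfl
      rw [mul_pow, ← C_pow, halg, show ((P.coeff i : S[X])) * (C (x^i) * X ^ i)
          = ((P.coeff i : S[X]) * C (x^i)) * X ^ i by ring,
        Polynomial.coeff_mul_X_pow', if_pos hi, Polynomial.coeff_mul_C]
    have key : ∑ i ∈ Finset.range (n+1), ((P.coeff i : S[X]).coeff (n - i)) * x ^ i = 0 := by
      rw [← Finset.sum_congr rfl hco, ← Polynomial.finset_sum_coeff, ← hexp, hev,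
        Polynomial.coeff_zero]
    refine ⟨n, hpos, fun j => ((P.coeff (n - j) : S[X]).coeff j), fun j hj => ?_, ?_⟩
    · exact (mem_reesAlgebra_iff I _).mp (P.coeff (n - j)).2 j
    · -- reindex
      rw [Finset.sum_range_succ] at key
      have hlead : ((P.coeff n : S[X]).coeff (n - n)) * x ^ n = x ^ n := by
        rw [Nat.sub_self]
        have : P.coeff n = 1 := hP.coeff_natDegree
        rw [this]
        simp
      rw [hlead] at key
      have reindex : ∑ j ∈ Finset.Icc 1 n, ((P.coeff (n-j) : S[X]).coeff j) * x ^ (n - j)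
          = ∑ i ∈ Finset.range n, ((P.coeff i : S[X]).coeff (n - i)) * x ^ i := by
        refine Finset.sum_nbij' (fun j => n - j) (fun i => n - i) ?_ ?_ ?_ ?_ ?_
        · intro j hj; simp only [Finset.mem_Icc] at hj
          simp only [Finset.mem_range]; omega
        · intro i hi; simp only [Finset.mem_range] at hi
          simp only [Finset.mem_Icc]; omega
        · intro j hj; simp only [Finset.mem_Icc] at hj; omega
        · intro i hi; simp only [Finset.mem_range] at hi; omega
        · intro j hj; simp only [Finset.mem_Icc] at hj
          congr 2; omega
      rw [reindex, add_comm]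
      exact key

lemma exists_monic_of_mem_intClosure {S : Type*} [CommRing S] {I : Ideal S} {x : S}
    (hx : x ∈ I.intClosure) :
    ∃ P : Polynomial ↥(reesAlgebra I), P.Monic ∧
      Polynomial.eval₂ (algebraMap ↥(reesAlgebra I) S[X]) (C x * X) P = 0 := by
  obtain ⟨n, hn, a, ha, heq⟩ := hx
  -- the coefficients, as elements of the Rees algebra
  set c : ℕ → ↥(reesAlgebra I) := fun i =>
    if hi : i ∈ Finset.Icc 1 n then ⟨monomial i (a i), reesAlgebra.monomial_mem.mpr (ha i hi)⟩
    else 0 with hc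
  refine ⟨X ^ n + ∑ i ∈ Finset.Icc 1 n, Polynomial.C (c i) * X ^ (n - i), ?_, ?_⟩
  · apply monic_X_pow_add
    apply lt_of_le_of_lt (Polynomial.degree_sum_le _ _)
    rw [Finset.sup_lt_iff (by exact_mod_cast WithBot.bot_lt_coe n)]
    intro i hi
    apply lt_of_le_of_lt (Polynomial.degree_C_mul_X_pow_le _ _)
    rw [Finset.mem_Icc] at hi
    exact_mod_cast Nat.sub_lt_of_pos_le hi.1 hi.2
  · rw [Polynomial.eval₂_add, Polynomial.eval₂_X_pow, Polynomial.eval₂_finset_sum]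
    have hterm : ∀ i ∈ Finset.Icc 1 n,
        Polynomial.eval₂ (algebraMap ↥(reesAlgebra I) S[X]) (C x * X)
          (Polynomial.C (c i) * X ^ (n - i))
        = C (a i * x ^ (n - i)) * X ^ n := by
      intro i hi
      rw [Finset.mem_Icc] at hi
      rw [Polynomial.eval₂_mul, Polynomial.eval₂_C, Polynomial.eval₂_X_pow]
      have : (algebraMap ↥(reesAlgebra I) S[X]) (c i) = monomial i (a i) := by
        rw [hc]; simp only [Finset.mem_Icc.mpr hi, dif_pos]; rfl
      rw [this, mul_pow, ← C_pow, ← Polynomial.C_mul_X_pow_eq_monomial]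
      rw [show C (a i) * X ^ i * (C (x ^ (n-i)) * X ^ (n - i))
          = C (a i * x ^ (n-i)) * (X ^ i * X ^ (n - i)) by rw [C_mul]; ring, ← pow_add]
      congr 2
      omega
    rw [Finset.sum_congr rfl hterm, ← Finset.sum_mul, mul_pow, ← C_pow, ← map_sum]
    rw [show (C (x ^ n) * X ^ n + (C (∑ i ∈ Finset.Icc 1 n, a i * x ^ (n - i))) * X ^ n)
        = C (x ^ n + ∑ i ∈ Finset.Icc 1 n, a i * x ^ (n - i)) * X ^ n by rw [C_add]; ring]
    rw [heq, C_0, zero_mul]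

section Middle
variable {S T : Type*} [CommRing S] [CommRing T] (h : S →+* T) (I : Ideal S)

/-- The canonical map from the Rees algebra of `I` to `T[X]`. -/
noncomputable def reesMap : ↥(reesAlgebra I) →+* T[X] :=
  (Polynomial.mapRingHom h).comp (reesAlgebra I).toSubring.subtype

lemma reesMap_integral_of_mem (hint : h.IsIntegral) {t : T[X]} (ht : t ∈ reesAlgebra (I.map h)) :
    (reesMap h I).IsIntegralElem t := by
  set G : Set T[X] := Set.range (C : T → T[X]) ∪ {p | ∃ a ∈ I, p = monomial 1 (h a)} with hG
  have hGint : ∀ p ∈ G, (reesMap h I).IsIntegralElem p := by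
    rintro p (⟨t, rfl⟩ | ⟨a, ha, rfl⟩)
    · obtain ⟨q, qm, hq⟩ := hint t
      refine ⟨q.map (algebraMap S ↥(reesAlgebra I)), qm.map _, ?_⟩
      rw [eval₂_map]
      have hcomp : (reesMap h I).comp (algebraMap S ↥(reesAlgebra I))
          = (C : T →+* T[X]).comp h := by
        ext s
        simp [reesMap, Polynomial.algebraMap_apply]
      rw [hcomp, ← Polynomial.hom_eval₂, hq, map_zero]
    · have hmem : (monomial 1 a : S[X]) ∈ reesAlgebra I :=
        reesAlgebra.monomial_mem.mpr (by simpa using ha)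
      have := (reesMap h I).isIntegralElem_map (x := ⟨monomial 1 a, hmem⟩)
      have hval : reesMap h I ⟨monomial 1 a, hmem⟩ = monomial 1 (h a) := by
        simp [reesMap, Polynomial.map_monomial]
      rwa [hval] at this
  have hmon1 : ∀ m ∈ I.map h, (monomial 1 m : T[X]) ∈ Subring.closure G := by
    intro m hm
    rw [Ideal.map] at hm
    induction hm using Submodule.span_induction with
    | mem p hp =>
      obtain ⟨a, ha, rfl⟩ := hp
      exact Subring.subset_closure (Or.inr ⟨a, ha, rfl⟩)
    | zero => rw [map_zero]; exact Subring.zero_mem _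
    | add p q _ _ hp hq => rw [map_add]; exact Subring.add_mem _ hp hq
    | smul t m _ hm =>
      rw [smul_eq_mul, ← C_mul_monomial]
      exact Subring.mul_mem _ (Subring.subset_closure (Or.inl ⟨t, rfl⟩)) hm
  have hclosure : ∀ (i : ℕ) (b : T), b ∈ (I.map h) ^ i →
      (monomial i b : T[X]) ∈ Subring.closure G := by
    intro i b hb
    induction hb using Submodule.pow_induction_on_left' with
    | algebraMap r =>
      exact Subring.subset_closure (Or.inl ⟨r, by simp [Polynomial.monomial_zero_left]⟩)
    | add p q i _ _ hp hq =>
      rw [map_add]; exact Subring.add_mem _ hp hq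
    | mem_mul m hm i p _ hp =>
      have heq : (monomial (i + 1) (m * p) : T[X]) = monomial 1 m * monomial i p := by
        rw [Polynomial.monomial_mul_monomial, Nat.add_comm 1 i]
      rw [heq]
      exact Subring.mul_mem _ (hmon1 m hm) hp
  have htG : t ∈ Subring.closure G := by
    rw [t.as_sum_support]
    refine Subring.sum_mem _ fun i hi => ?_
    exact hclosure i _ ((mem_reesAlgebra_iff _ t).mp ht i)
  exact IsIntegral.of_mem_closure'' G hGint t htG

end Middle

set_option synthInstance.maxHeartbeats 1000000 in
set_option maxHeartbeats 2000000 in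
/-- If `h : S → T` is an integral ring morphism with nil kernel, then for every ideal
`I` of `S`, the integral closure of `I` equals the preimage under `h` of the
integral closure of the ideal `I·T`. -/
theorem intClosure_eq_preimage_of_integral {S T : Type*} [CommRing S] [CommRing T]
    (h : S →+* T) (hint : h.IsIntegral)
    (hker : RingHom.ker h ≤ nilradical S) (I : Ideal S) :
    I.intClosure = h ⁻¹' (I.map h).intClosure := by
  ext x
  constructor
  · rintro ⟨n, hn, a, ha, heq⟩
    refine ⟨n, hn, fun i => h (a i), fun i hi => ?_, ?_⟩
    · rw [← Ideal.map_pow]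
      exact Ideal.mem_map_of_mem h (ha i hi)
    · have := congrArg h heq
      simpa only [map_add, map_pow, map_sum, map_mul, map_zero] using this
  · intro hx
    obtain ⟨P, hPm, hPev⟩ := exists_monic_of_mem_intClosure hx
    letI : Algebra ↥(reesAlgebra I) T[X] := (reesMap h I).toAlgebra
    set A := integralClosure ↥(reesAlgebra I) T[X] with hA
    -- map P into a polynomial over A
    let ρ : ↥(reesAlgebra (I.map h)) →+* ↥A :=
      RingHom.codRestrict (reesAlgebra (I.map h)).toSubring.subtype A.toSubring
        (fun c => reesMap_integral_of_mem h I hint c.2)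
    have hyA : IsIntegral ↥A (C (h x) * X : T[X]) := by
      refine ⟨P.map ρ, hPm.map _, ?_⟩
      rw [eval₂_map]
      have : (algebraMap ↥A T[X]).comp ρ = algebraMap ↥(reesAlgebra (I.map h)) T[X] := rfl
      rw [this]
      exact hPev
    have hy : IsIntegral ↥(reesAlgebra I) (C (h x) * X : T[X]) := isIntegral_trans _ hyA
    obtain ⟨Q, hQm, hQev⟩ := hy
    set z := Polynomial.eval₂ (algebraMap ↥(reesAlgebra I) S[X]) (C x * X) Q with hz
    have hmapz : Polynomial.mapRingHom h z = 0 := by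
      rw [hz, Polynomial.hom_eval₂]
      have h1 : (Polynomial.mapRingHom h).comp (algebraMap ↥(reesAlgebra I) S[X])
          = reesMap h I := rfl
      have h2 : Polynomial.mapRingHom h (C x * X) = C (h x) * X := by
        simp [Polynomial.map_C]
      rw [h1, h2]
      exact hQev
    have hnil : IsNilpotent z := by
      rw [Polynomial.isNilpotent_iff]
      intro i
      have : h (z.coeff i) = 0 := by
        have := congrArg (fun p => Polynomial.coeff p i) hmapz
        simpa [Polynomial.coeff_map] using this
      exact mem_nilradical.mp (hker (RingHom.mem_ker.mpr this))
    obtain ⟨k, hk⟩ := hnil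
    refine mem_intClosure_of_monic (Q ^ k) (hQm.pow k) ?_
    rw [Polynomial.eval₂_pow]
    exact hk
end

section
/- If R → A →g B are commutative ring morphisms with g integral, then the relative Lipschitz saturation A*_{B,R} is a radicial A-algebra; equivalently, for every x ∈ A*_{B,R}, the element x ⊗_A 1 − 1 ⊗_A x is nilpotent in A*_{B,R} ⊗_A A*_{B,R}. -/
open TensorProduct

variable (R A B : Type*) [CommRing R] [CommRing A] [CommRing B]
  [Algebra R A] [Algebra R B] [Algebra A B] [IsScalarTower R A B]

/-- Extension of a homomorphism into an algebraically closed field along an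
integral extension. -/
lemma extend_to_algClosed {T B K : Type*} [CommRing T] [CommRing B] [Algebra T B]
    [Algebra.IsIntegral T B] [Field K] [IsAlgClosed K]
    (hinj : Function.Injective (algebraMap T B)) (f : T →+* K) :
    ∃ U : B →+* K, U.comp (algebraMap T B) = f := by
  haveI : (RingHom.ker f).IsPrime := RingHom.ker_isPrime f
  obtain ⟨q, -, hqprime, hq⟩ := Ideal.exists_ideal_over_prime_of_isIntegral (RingHom.ker f)
    (⊥ : Ideal B) (by
      rw [← RingHom.ker_eq_comap_bot]
      rw [(RingHom.injective_iff_ker_eq_bot _).mp hinj]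
      exact bot_le)
  haveI := hqprime
  -- the induced map on quotients
  let fbar : T ⧸ q.comap (algebraMap T B) →+* K :=
    Ideal.Quotient.lift _ f (by rw [hq]; exact fun a ha => ha)
  have hfbar_inj : Function.Injective fbar := by
    rw [RingHom.injective_iff_ker_eq_bot, RingHom.ker_eq_bot_iff_eq_zero]
    rintro ⟨t⟩ ht
    have : f t = 0 := ht
    exact Ideal.Quotient.eq_zero_iff_mem.mpr (by rw [hq]; exact this)
  letI : Algebra (T ⧸ q.comap (algebraMap T B)) K := fbar.toAlgebra
  haveI : FaithfulSMul (T ⧸ q.comap (algebraMap T B)) K :=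
    (faithfulSMul_iff_algebraMap_injective _ _).mpr hfbar_inj
  haveI : FaithfulSMul (T ⧸ q.comap (algebraMap T B)) (B ⧸ q) :=
    (faithfulSMul_iff_algebraMap_injective _ _).mpr (Ideal.algebraMap_quotient_injective)
  haveI : Algebra.IsAlgebraic (T ⧸ q.comap (algebraMap T B)) (B ⧸ q) :=
    Algebra.IsIntegral.isAlgebraic
  haveI : Module.IsTorsionFree (T ⧸ q.comap (algebraMap T B)) (B ⧸ q) :=
    FaithfulSMul.to_isTorsionFree _ _
  haveI : Module.IsTorsionFree (T ⧸ q.comap (algebraMap T B)) K :=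
    FaithfulSMul.to_isTorsionFree _ _
  let Uq : B ⧸ q →ₐ[T ⧸ q.comap (algebraMap T B)] K := IsAlgClosed.lift
  refine ⟨Uq.toRingHom.comp (Ideal.Quotient.mk q), ?_⟩
  ext t
  have h1 : (Ideal.Quotient.mk q) (algebraMap T B t) =
      algebraMap (T ⧸ q.comap (algebraMap T B)) (B ⧸ q) (Ideal.Quotient.mk _ t) :=
    rfl
  simp only [RingHom.coe_comp, Function.comp_apply, AlgHom.toRingHom_eq_coe,
    RingHom.coe_coe, h1, AlgHom.commutes]
  rfl

universe u in
/-- Every prime quotient embeds into an algebraically closed field. -/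
lemma exists_algClosed_quotient {C : Type u} [CommRing C] (P : Ideal C) [P.IsPrime] :
    ∃ (K : Type u) (_ : Field K) (_ : IsAlgClosed K) (pi : C →+* K),
      RingHom.ker pi = P := by
  let Q := C ⧸ P
  let emb : Q →+* AlgebraicClosure (FractionRing Q) :=
    (algebraMap (FractionRing Q) (AlgebraicClosure (FractionRing Q))).comp
      (algebraMap Q (FractionRing Q))
  have hinj : Function.Injective emb := by
    show Function.Injective
      (⇑(algebraMap (FractionRing Q) (AlgebraicClosure (FractionRing Q))) ∘
        ⇑(algebraMap Q (FractionRing Q)))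
    exact (algebraMap (FractionRing Q) (AlgebraicClosure (FractionRing Q))).injective.comp
      (IsFractionRing.injective Q (FractionRing Q))
  refine ⟨AlgebraicClosure (FractionRing Q), inferInstance, inferInstance,
    emb.comp (Ideal.Quotient.mk P), ?_⟩
  ext z
  simp only [RingHom.mem_ker, RingHom.comp_apply]
  rw [← map_zero emb, hinj.eq_iff]
  exact Ideal.Quotient.eq_zero_iff_mem

set_option synthInstance.maxHeartbeats 400000 in
set_option maxHeartbeats 1000000 in
/-- Main theorem: if `g : A → B` is integral, the relative Lipschitz saturation
`A*_{B,R}` is a radicial `A`-algebra; equivalently, for every `x ∈ A*_{B,R}`, the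
element `x ⊗_A 1 - 1 ⊗_A x` is nilpotent in `A*_{B,R} ⊗_A A*_{B,R}`. -/
theorem lipSat_radicial [Algebra.IsIntegral A B]
    (S : Subalgebra A B) (hS : (S : Set B) = lipSat R A B) :
    ∀ x : S, IsNilpotent (x ⊗ₜ[A] 1 - 1 ⊗ₜ[A] x : S ⊗[A] S) := by
  intro x
  have hx : (x : B) ∈ lipSat R A B := hS ▸ x.2
  rw [← mem_nilradical, nilradical_eq_sInf, Ideal.mem_sInf]
  intro P hP
  haveI : P.IsPrime := hP
  obtain ⟨K, _, _, toK, hker⟩ := exists_algClosed_quotient P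
  -- the two maps S → K
  let f : ↥S →+* K :=
    toK.comp (Algebra.TensorProduct.includeLeft (R := A) (S := A) (A := ↥S) (B := ↥S)).toRingHom
  let g : ↥S →+* K :=
    toK.comp (Algebra.TensorProduct.includeRight (R := A) (A := ↥S) (B := ↥S)).toRingHom
  -- B is integral over S
  haveI : Algebra.IsIntegral ↥S B :=
    ⟨fun b => (Algebra.IsIntegral.isIntegral (R := A) b).tower_top⟩
  have hSB : Function.Injective (algebraMap ↥S B) := Subtype.val_injective
  obtain ⟨U, hU⟩ := extend_to_algClosed hSB f
  obtain ⟨V, hV⟩ := extend_to_algClosed hSB g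
  have hUx : U ↑x = toK ((x : ↥S) ⊗ₜ[A] 1) := RingHom.congr_fun hU x
  have hVx : V ↑x = toK (1 ⊗ₜ[A] (x : ↥S)) := RingHom.congr_fun hV x
  -- A-algebra structure on K
  letI : Algebra A K := (toK.comp (algebraMap A (↥S ⊗[A] ↥S))).toAlgebra
  have hUA : ∀ a : A, U (algebraMap A B a) = algebraMap A K a := by
    intro a
    have h1 : algebraMap A B a = algebraMap ↥S B (algebraMap A ↥S a) :=
      (IsScalarTower.algebraMap_apply A ↥S B a)
    rw [h1, ← RingHom.comp_apply, hU]
    show toK (Algebra.TensorProduct.includeLeft (algebraMap A ↥S a)) = _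
    rw [AlgHom.commutes]
    rfl
  have hVA : ∀ a : A, V (algebraMap A B a) = algebraMap A K a := by
    intro a
    have h1 : algebraMap A B a = algebraMap ↥S B (algebraMap A ↥S a) :=
      (IsScalarTower.algebraMap_apply A ↥S B a)
    rw [h1, ← RingHom.comp_apply, hV]
    show toK (Algebra.TensorProduct.includeRight (algebraMap A ↥S a)) = _
    rw [AlgHom.commutes]
    rfl
  let UA : B →ₐ[A] K := { U with commutes' := hUA }
  let VA : B →ₐ[A] K := { V with commutes' := hVA }
  -- R-algebra structure on K
  letI : Algebra R K := ((algebraMap A K).comp (algebraMap R A)).toAlgebra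
  haveI : IsScalarTower R A K := IsScalarTower.of_algebraMap_eq fun _ => rfl
  have hURc : ∀ r : R, U (algebraMap R B r) = algebraMap R K r := by
    intro r
    rw [IsScalarTower.algebraMap_apply R A B, hUA]; rfl
  have hVRc : ∀ r : R, V (algebraMap R B r) = algebraMap R K r := by
    intro r
    rw [IsScalarTower.algebraMap_apply R A B, hVA]; rfl
  let UR : B →ₐ[R] K := { U with commutes' := hURc }
  let VR : B →ₐ[R] K := { V with commutes' := hVRc }
  let w : B ⊗[R] B →ₐ[R] K := Algebra.TensorProduct.productMap UR VR
  let wbar : B ⊗[A] B →ₐ[A] K := Algebra.TensorProduct.productMap UA VA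
  have hfact : w = (wbar.restrictScalars R).comp (lipPhi R A B) := by
    apply Algebra.TensorProduct.ext <;> ext b <;>
      simp [w, wbar, lipPhi, UR, VR, UA, VA]
  -- kill the coefficients
  obtain ⟨n, hn, a, ha, heq⟩ := hx
  have hw : ∀ i ∈ Finset.Icc 1 n, w (a i) = 0 := by
    intro i hi
    have hi1 : i ≠ 0 := by
      have := (Finset.mem_Icc.mp hi).1; omega
    have hker' : a i ∈ RingHom.ker (lipPhi R A B) :=
      Ideal.pow_le_self hi1 (ha i hi)
    rw [hfact]
    simp only [AlgHom.coe_comp, AlgHom.coe_restrictScalars', Function.comp_apply]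
    rw [RingHom.mem_ker.mp hker', map_zero]
  -- apply w to the integral dependence equation
  have hUV : U ↑x = V ↑x := by
    have h0 := congrArg w heq
    rw [map_zero, map_add, map_pow, map_sum] at h0
    have hdelta : w (lipDelta R B ↑x) = U ↑x - V ↑x := by
      simp [w, lipDelta, Algebra.TensorProduct.productMap_apply_tmul, UR, VR]
    rw [hdelta] at h0
    have h1 : ∑ i ∈ Finset.Icc 1 n, w (a i * lipDelta R B ↑x ^ (n - i)) = 0 := by
      apply Finset.sum_eq_zero
      intro i hi
      rw [map_mul, hw i hi, zero_mul]
    rw [h1, add_zero] at h0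
    have := pow_eq_zero_iff hn.ne' |>.mp h0
    exact sub_eq_zero.mp this
  -- conclude membership in P
  rw [hUx, hVx] at hUV
  have hmem : (x : ↥S) ⊗ₜ[A] 1 - 1 ⊗ₜ[A] (x : ↥S) ∈ RingHom.ker toK := by
    rw [RingHom.mem_ker, map_sub, hUV, sub_self]
  rw [hker] at hmem
  exact hmem
end
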